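/- Let d_0, d_1, …, d_n be positive reals, let M : {1,…,n} → ℝ be any function, and for 0 ≤ i < j ≤ n define s(i,j) = Σ_{k=i+1}^{j-1} d_k + max_{i ≤ k ≤ j-1} d_k and U(i,j) = s(i,j) + d_j. Fix 2 ≤ i < n, and suppose j* is a minimizer of j ↦ max( M(j), U(i,j) ) over i < j ≤ n. Then for every j with j* < j ≤ n, max( M(j*), U(i−1, j*) ) ≤ max( M(j), U(i−1, j) ). Consequently, the minimum of j ↦ max( M(j), U(i−1,j) ) over i−1 < j ≤ n is attained at some index j ≤ j*. -/
import Mathlib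


/-- `segSum d i j = Σ_{k=i+1}^{j-1} d_k`. -/
noncomputable def segSum (d : ℕ → ℝ) (i j : ℕ) : ℝ := ∑ k ∈ Finset.Ioo i j, d k

/-- `segMax d i j = max_{i ≤ k ≤ j-1} d_k` (junk value `0` when `j ≤ i`). -/
noncomputable def segMax (d : ℕ → ℝ) (i j : ℕ) : ℝ :=
  if h : i < j then (Finset.Ico i j).sup' (Finset.nonempty_Ico.mpr h) d else 0

/-- `s(i,j) = Σ_{k=i+1}^{j-1} d_k + max_{i ≤ k ≤ j-1} d_k`. -/
noncomputable def sfun (d : ℕ → ℝ) (i j : ℕ) : ℝ := segSum d i j + segMax d i j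

/-- `U(i,j) = s(i,j) + d_j`. -/
noncomputable def U (d : ℕ → ℝ) (i j : ℕ) : ℝ := sfun d i j + d j

lemma segMax_mono (d : ℕ → ℝ) {i i' j j' : ℕ} (hii : i' ≤ i) (hjj : j ≤ j')
    (hij : i < j) : segMax d i j ≤ segMax d i' j' := by
  unfold segMax
  rw [dif_pos hij, dif_pos (lt_of_le_of_lt hii (lt_of_lt_of_le hij hjj))]
  exact Finset.sup'_mono d (Finset.Ico_subset_Ico hii hjj) _

lemma U_mono_right (d : ℕ → ℝ) {n i j j' : ℕ} (hd : ∀ k ≤ n, 0 ≤ d k)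
    (hij : i < j) (hjj : j < j') (hj'n : j' ≤ n) : U d i j ≤ U d i j' := by
  unfold U sfun segSum
  have h1 : ∑ k ∈ Finset.Ioo i j, d k + d j ≤ ∑ k ∈ Finset.Ioo i j', d k := by
    have hins : insert j (Finset.Ioo i j) = Finset.Ioc i j :=
      Finset.Ioo_insert_right hij
    have hsub : Finset.Ioc i j ⊆ Finset.Ioo i j' := by
      intro k hk
      simp only [Finset.mem_Ioc, Finset.mem_Ioo] at *
      omega
    calc ∑ k ∈ Finset.Ioo i j, d k + d j = ∑ k ∈ Finset.Ioc i j, d k := by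
          rw [← hins, Finset.sum_insert (by simp), add_comm]
      _ ≤ ∑ k ∈ Finset.Ioo i j', d k := by
          apply Finset.sum_le_sum_of_subset_of_nonneg hsub
          intro k hk _
          exact hd k (le_trans (le_of_lt (Finset.mem_Ioo.mp hk).2) hj'n)
  have h2 : segMax d i j ≤ segMax d i j' := segMax_mono d le_rfl (le_of_lt hjj) hij
  have h3 : 0 ≤ d j' := hd j' hj'n
  linarith

lemma U_mono_left (d : ℕ → ℝ) {n i j : ℕ} (hd : ∀ k ≤ n, 0 ≤ d k)
    (hi : 1 ≤ i) (hij : i < j) (hjn : j ≤ n) : U d i j ≤ U d (i - 1) j := by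
  unfold U sfun segSum
  have h1 : ∑ k ∈ Finset.Ioo i j, d k ≤ ∑ k ∈ Finset.Ioo (i - 1) j, d k := by
    apply Finset.sum_le_sum_of_subset_of_nonneg
    · apply Finset.Ioo_subset_Ioo (by omega) le_rfl
    · intro k hk _
      exact hd k (le_trans (le_of_lt (Finset.mem_Ioo.mp hk).2) hjn)
  have h2 : segMax d i j ≤ segMax d (i - 1) j := segMax_mono d (by omega) le_rfl hij
  linarith

/-- Lemma 4: if `j*` minimizes `j ↦ max(M(j), U(i,j))` over `i < j ≤ n`, then for
every `j* < j ≤ n` we have `max(M(j*), U(i−1,j*)) ≤ max(M(j), U(i−1,j))`, and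
consequently the minimum of `j ↦ max(M(j), U(i−1,j))` over `i−1 < j ≤ n` is
attained at some index `j ≤ j*`. -/
theorem minimizer_monotone (n : ℕ) (d : ℕ → ℝ) (hd : ∀ k ≤ n, 0 < d k)
    (M : ℕ → ℝ) (i : ℕ) (hi : 2 ≤ i) (hin : i < n)
    (jstar : ℕ) (hj1 : i < jstar) (hj2 : jstar ≤ n)
    (hmin : ∀ j, i < j → j ≤ n →
      max (M jstar) (U d i jstar) ≤ max (M j) (U d i j)) :
    (∀ j, jstar < j → j ≤ n →
      max (M jstar) (U d (i - 1) jstar) ≤ max (M j) (U d (i - 1) j)) ∧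
    ∃ j, i - 1 < j ∧ j ≤ n ∧ j ≤ jstar ∧
      ∀ j', i - 1 < j' → j' ≤ n →
        max (M j) (U d (i - 1) j) ≤ max (M j') (U d (i - 1) j') := by
  have hd' : ∀ k ≤ n, 0 ≤ d k := fun k hk => le_of_lt (hd k hk)
  have part1 : ∀ j, jstar < j → j ≤ n →
      max (M jstar) (U d (i - 1) jstar) ≤ max (M j) (U d (i - 1) j) := by
    intro j hjs hjn
    apply max_le
    · -- M jstar ≤ max (M j) (U d (i-1) j)
      have h1 : M jstar ≤ max (M j) (U d i j) :=
        le_trans (le_max_left _ _) (hmin j (lt_trans hj1 hjs) hjn)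
      have h2 : U d i j ≤ U d (i - 1) j :=
        U_mono_left d hd' (by omega) (lt_trans hj1 hjs) hjn
      exact le_trans h1 (max_le_max le_rfl h2)
    · -- U d (i-1) jstar ≤ U d (i-1) j
      have : U d (i - 1) jstar ≤ U d (i - 1) j :=
        U_mono_right d hd' (by omega) hjs hjn
      exact le_trans this (le_max_right _ _)
  refine ⟨part1, ?_⟩
  have hne : (Finset.Ioc (i - 1) jstar).Nonempty :=
    ⟨jstar, by simp only [Finset.mem_Ioc]; omega⟩
  obtain ⟨j, hjmem, hjmin⟩ := Finset.exists_min_image (Finset.Ioc (i - 1) jstar)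
    (fun j => max (M j) (U d (i - 1) j)) hne
  simp only [Finset.mem_Ioc] at hjmem
  refine ⟨j, hjmem.1, le_trans hjmem.2 hj2, hjmem.2, ?_⟩
  intro j' hj'1 hj'2
  by_cases hc : j' ≤ jstar
  · exact hjmin j' (by simp only [Finset.mem_Ioc]; omega)
  · have h1 : max (M j) (U d (i - 1) j) ≤ max (M jstar) (U d (i - 1) jstar) :=
      hjmin jstar (by simp only [Finset.mem_Ioc]; omega)
    exact le_trans h1 (part1 j' (by omega) hj'2)
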